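/- Let f, g ∈ L¹([0,π];ℝ), let A, H ∈ ℝ and N ∈ ℕ. For n ∈ ℕ define b_n := (−1)^n + ∫_0^π f(t)cos(nt) dt and a_n := (−1)^n A + ∫_0^π g(t)cos(nt) dt. If a_n = −H·b_n for every n > N, then H = −A. -/

import Mathlib

open MeasureTheory Filter Real Topology

/-- Riemann–Lebesgue for the cosine transform of an integrable real function. -/
lemma rl_cos (F : ℝ → ℝ) (hF : Integrable F) :
    Tendsto (fun n : ℕ => ∫ t : ℝ, F t * Real.cos (n * t)) atTop (𝓝 0) := by
  have hG : Integrable (fun t : ℝ => (F t : ℂ)) := hF.ofReal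
  have hRL := Real.tendsto_integral_exp_smul_cocompact (fun t : ℝ => (F t : ℂ))
  have hw : Tendsto (fun n : ℕ => -(n : ℝ) / (2 * Real.pi)) atTop (cocompact ℝ) := by
    rw [cocompact_eq_atBot_atTop]
    refine Tendsto.mono_right ?_ le_sup_left
    apply Filter.Tendsto.atBot_div_const (by positivity)
    exact tendsto_neg_atBot_iff.mpr tendsto_natCast_atTop_atTop
  have hcomp := hRL.comp hw
  -- rewrite the composed integral
  have key : ∀ n : ℕ, (∫ v : ℝ, Real.fourierChar (-(v * (-(n : ℝ) / (2 * Real.pi)))) •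
      ((F v : ℂ))) = ∫ v : ℝ, Complex.exp ((n : ℝ) * v * Complex.I) * (F v : ℂ) := by
    intro n
    congr 1
    ext v
    have hπ : (Real.pi : ℝ) ≠ 0 := Real.pi_ne_zero
    have h : 2 * Real.pi * (-(v * (-(n : ℝ) / (2 * Real.pi)))) = (n : ℝ) * v := by
      field_simp
    rw [Circle.smul_def, Real.fourierChar_apply, h]
    norm_cast
  have hre := (Complex.continuous_re.tendsto 0).comp hcomp
  simp only [Function.comp_apply, Complex.zero_re] at hre
  refine hre.congr fun n => ?_
  show (∫ v : ℝ, Real.fourierChar (-(v * (-(n : ℝ) / (2 * Real.pi)))) • ((F v : ℂ))).re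
      = ∫ t : ℝ, F t * Real.cos (n * t)
  rw [key n]
  have hint : Integrable (fun v : ℝ => Complex.exp ((n : ℝ) * v * Complex.I) * (F v : ℂ)) := by
    apply hG.bdd_mul (c := 1)
    · exact (Complex.continuous_exp.comp (by continuity)).aestronglyMeasurable
    · refine Filter.Eventually.of_forall fun v => ?_
      rw [show ((n : ℝ) : ℂ) * v * Complex.I
          = (((n : ℝ) * v : ℝ) : ℂ) * Complex.I by push_cast; ring,
        Complex.norm_exp_ofReal_mul_I]
  have hIR := integral_re hint
  simp only [RCLike.re_to_complex] at hIR
  rw [← hIR]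
  congr 1
  ext v
  rw [Complex.mul_re]
  have h1 : (Complex.exp ((n : ℝ) * v * Complex.I)).re = Real.cos ((n : ℝ) * v) := by
    rw [show ((n : ℝ) * v : ℂ) * Complex.I = ((((n : ℝ) * v : ℝ)) : ℂ) * Complex.I by push_cast; ring,
      Complex.exp_ofReal_mul_I_re]
  have h2 : (Complex.exp ((n : ℝ) * v * Complex.I)).im = Real.sin ((n : ℝ) * v) := by
    rw [show ((n : ℝ) * v : ℂ) * Complex.I = ((((n : ℝ) * v : ℝ)) : ℂ) * Complex.I by push_cast; ring,
      Complex.exp_ofReal_mul_I_im]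
  rw [h1, h2, Complex.ofReal_re, Complex.ofReal_im]
  ring

/-- Recovery of the right boundary constant from finite spectral data:
if `a_n = (−1)^n A + ∫ g cos(n·)` and `b_n = (−1)^n + ∫ f cos(n·)` satisfy
`a_n = −H b_n` for all `n > N`, then `H = −A`. -/
theorem stmt1 (f g : ℝ → ℝ)
    (hf : IntegrableOn f (Set.Icc (0 : ℝ) Real.pi))
    (hg : IntegrableOn g (Set.Icc (0 : ℝ) Real.pi))
    (A H : ℝ) (N : ℕ) (a b : ℕ → ℝ)
    (hb : ∀ n : ℕ, b n = (-1) ^ n + ∫ t in Set.Icc (0 : ℝ) Real.pi, f t * Real.cos (n * t))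
    (ha : ∀ n : ℕ, a n = (-1) ^ n * A + ∫ t in Set.Icc (0 : ℝ) Real.pi, g t * Real.cos (n * t))
    (hrel : ∀ n : ℕ, N < n → a n = -H * b n) :
    H = -A := by
  set s := Set.Icc (0 : ℝ) Real.pi
  have hms : MeasurableSet s := measurableSet_Icc
  set F := s.indicator f with hFdef
  set G := s.indicator g with hGdef
  have hFi : Integrable F := (integrable_indicator_iff hms).mpr hf
  have hGi : Integrable G := (integrable_indicator_iff hms).mpr hg
  have hIf : ∀ n : ℕ, (∫ t in s, f t * Real.cos (n * t)) = ∫ t : ℝ, F t * Real.cos (n * t) := by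
    intro n
    rw [← integral_indicator hms]
    congr 1; ext t
    by_cases ht : t ∈ s <;> simp [hFdef, Set.indicator_of_mem, Set.indicator_of_notMem, ht]
  have hIg : ∀ n : ℕ, (∫ t in s, g t * Real.cos (n * t)) = ∫ t : ℝ, G t * Real.cos (n * t) := by
    intro n
    rw [← integral_indicator hms]
    congr 1; ext t
    by_cases ht : t ∈ s <;> simp [hGdef, Set.indicator_of_mem, Set.indicator_of_notMem, ht]
  have hrlF := rl_cos F hFi
  have hrlG := rl_cos G hGi
  -- even subsequence n_m = 2*(m + N + 1)
  have hmono : Tendsto (fun m : ℕ => 2 * (m + N + 1)) atTop atTop := by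
    refine tendsto_atTop.2 fun c => eventually_atTop.2 ⟨c, fun m hm => by omega⟩
  have h1 := (hrlF.comp hmono).const_mul (-H)
  have h2 := (hrlG.comp hmono).neg
  have hlim := h1.add h2
  simp only [mul_zero, neg_zero, add_zero, Function.comp_apply] at hlim
  have heq : ∀ m : ℕ, (-H) * (∫ t : ℝ, F t * Real.cos ((2 * (m + N + 1) : ℕ) * t))
      + -(∫ t : ℝ, G t * Real.cos ((2 * (m + N + 1) : ℕ) * t)) = A + H := by
    intro m
    set n := 2 * (m + N + 1) with hndef
    have hn : N < n := by omega
    have hrel' := hrel n hn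
    rw [ha n, hb n] at hrel'
    have hpow : ((-1 : ℝ)) ^ n = 1 := by
      rw [hndef, pow_mul]; norm_num
    rw [hpow, hIf n, hIg n] at hrel'
    linarith
  have hlim2 : Tendsto (fun _ : ℕ => A + H) atTop (𝓝 0) := hlim.congr heq
  have := tendsto_nhds_unique hlim2 tendsto_const_nhds
  linarith [this]
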